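/- Let X be a finite set, w ≤ n positive integers, m := ⌊n/w⌋, ψ : X^w → ℝ, D a probability distribution on X, and f : ℝ → ℝ convex. Define ψ̄(S) := E_{S' ∼ uniform size-w sub-multiset of S}[ψ(S')] for S ∈ Xⁿ. Then E_{S ∼ Dⁿ}[f(ψ̄(S))] ≤ E_{S⁽¹⁾,...,S⁽ᵐ⁾ i.i.d. ∼ D^w}[ f( (1/m)·Σᵢ ψ(S⁽ⁱ⁾) ) ]. -/
import Mathlib
open Finset

private lemma marg {X : Type*} [Fintype X] {ι : Type*} [Fintype ι] [DecidableEq ι] {n : ℕ}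
    (e : ι ↪ Fin n) (D : X → ℝ) (hD1 : ∑ x, D x = 1) (F : (ι → X) → ℝ) :
    ∑ S : Fin n → X, (∏ i, D (S i)) * F (fun i => S (e i))
      = ∑ T : ι → X, (∏ i, D (T i)) * F T := by
  classical
  set p : Fin n → Prop := fun x => x ∈ Set.range e with hp
  let A : ι ≃ {x // p x} := Equiv.ofInjective e e.injective
  let E1 : (Fin n → X) ≃ ({x // p x} → X) × ({x // ¬ p x} → X) :=
    Equiv.piEquivPiSubtypeProd p (fun _ => X)
  rw [← Equiv.sum_comp E1.symm]
  rw [Fintype.sum_prod_type]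
  have key : ∀ (a : {x // p x} → X) (b : {x // ¬ p x} → X),
      (∏ i, D (E1.symm (a, b) i)) * F (fun i => E1.symm (a, b) (e i))
      = ((∏ r, D (a r)) * F (fun i => a (A i))) * (∏ r, D (b r)) := by
    intro a b
    have hS : ∀ x : Fin n, E1.symm (a,b) x = if h : p x then a ⟨x, h⟩ else b ⟨x, h⟩ := by
      intro x; simp [E1, Equiv.piEquivPiSubtypeProd]
    have h1 : (∏ i, D (E1.symm (a, b) i)) = (∏ r, D (a r)) * (∏ r, D (b r)) := by
      rw [← Fintype.prod_subtype_mul_prod_subtype p (fun x => D (E1.symm (a,b) x))]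
      congr 1
      · refine Finset.prod_congr (by congr!) (fun r _ => ?_)
        rw [hS, dif_pos r.2]
      · refine Finset.prod_congr (by congr!) (fun r _ => ?_)
        rw [hS, dif_neg r.2]
    have h2 : (fun i => E1.symm (a,b) (e i)) = fun i => a (A i) := by
      funext i
      have hpi : p (e i) := ⟨i, rfl⟩
      rw [hS, dif_pos hpi]; rfl
    rw [h1, h2]; ring
  simp only [key]
  rw [← Finset.sum_mul_sum]
  have hb : (∑ b : {x // ¬ p x} → X, ∏ r, D (b r)) = 1 := by
    rw [← Fintype.piFinset_univ, ← Finset.prod_univ_sum]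
    simp [hD1]
  rw [hb, mul_one]
  have := Equiv.sum_comp (A.arrowCongr (Equiv.refl X))
    (fun a : {x // p x} → X => (∏ r, D (a r)) * F (fun i => a (A i)))
  rw [← this]
  apply Fintype.sum_congr
  intro T
  congr 1
  · rw [← Equiv.prod_comp A (fun r => D ((A.arrowCongr (Equiv.refl X)) T r))]
    refine Finset.prod_congr rfl (fun i _ => ?_)
    congr 1; simp
  · congr 1; funext i; simp


private lemma extend_emb {w n : ℕ} (u g : Fin w ↪ Fin n) :
    ∃ π : Equiv.Perm (Fin n), ∀ j, π (u j) = g j := by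
  classical
  let eg : {x : Fin n // x ∈ Set.range u} ≃ {x : Fin n // x ∈ Set.range g} :=
    (Equiv.ofInjective u u.injective).symm.trans (Equiv.ofInjective g g.injective)
  refine ⟨eg.extendSubtype, fun j => ?_⟩
  have hm : u j ∈ Set.range u := ⟨j, rfl⟩
  rw [eg.extendSubtype_apply_of_mem _ hm]
  show ((Equiv.ofInjective g g.injective) ((Equiv.ofInjective u u.injective).symm ⟨u j, hm⟩) : Fin n) = g j
  rw [Equiv.ofInjective_symm_apply]
  rfl

private lemma keyB {w n : ℕ} (u : Fin w ↪ Fin n) (F : (Fin w ↪ Fin n) → ℝ) :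
    (Fintype.card (Fin w ↪ Fin n) : ℝ) *
        ∑ π : Equiv.Perm (Fin n), F (u.trans π.toEmbedding)
      = (Fintype.card (Equiv.Perm (Fin n)) : ℝ) * ∑ g : Fin w ↪ Fin n, F g := by
  classical
  set Φ : Equiv.Perm (Fin n) → (Fin w ↪ Fin n) := fun π => u.trans π.toEmbedding with hΦ
  -- fibers have constant cardinality
  have hfib : ∀ g : Fin w ↪ Fin n,
      (univ.filter (fun π => Φ π = g)).card = (univ.filter (fun π => Φ π = u)).card := by
    intro g
    obtain ⟨ρ, hρ⟩ := extend_emb u g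
    refine Finset.card_bij' (fun π _ => ρ⁻¹ * π) (fun π _ => ρ * π) ?_ ?_ ?_ ?_
    · intro π hπ
      simp only [mem_filter, mem_univ, true_and] at hπ ⊢
      ext j
      have : π (u j) = g j := by
        have := congrArg (fun (e : Fin w ↪ Fin n) => e j) hπ
        simpa [Φ] using this
      simp [Φ, this, ← hρ j]
    · intro π hπ
      simp only [mem_filter, mem_univ, true_and] at hπ ⊢
      ext j
      have : π (u j) = u j := by
        have := congrArg (fun (e : Fin w ↪ Fin n) => e j) hπ
        simpa [Φ] using this
      simp [Φ, this, hρ j]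
    · intro π _; simp [mul_assoc]
    · intro π _; simp [mul_assoc]
  set c : ℕ := (univ.filter (fun π => Φ π = u)).card with hc
  have hsum : ∀ G : (Fin w ↪ Fin n) → ℝ,
      ∑ π : Equiv.Perm (Fin n), G (Φ π) = c * ∑ g, G g := by
    intro G
    rw [← Finset.sum_fiberwise_of_maps_to (fun π _ => mem_univ (Φ π)) (fun π => G (Φ π))]
    rw [Finset.mul_sum]
    refine Finset.sum_congr rfl (fun g _ => ?_)
    have hconst : ∑ π ∈ univ.filter (fun π => Φ π = g), G (Φ π)
        = ∑ _π ∈ univ.filter (fun π => Φ π = g), G g := by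
      refine Finset.sum_congr rfl (fun π hπ => ?_)
      simp only [mem_filter, mem_univ, true_and] at hπ
      rw [hπ]
    rw [hconst, Finset.sum_const, hfib g, nsmul_eq_mul]
  have h1 := hsum F
  have h2 := hsum (fun _ => (1 : ℝ))
  simp only [Finset.sum_const, Finset.card_univ, nsmul_eq_mul, mul_one] at h2
  rw [h1, h2]
  ring

theorem stmt_18 {X : Type*} [Fintype X] (w n : ℕ) (hw : 0 < w) (hwn : w ≤ n)
    (ψ : (Fin w → X) → ℝ)
    (D : X → ℝ) (hD0 : ∀ x, 0 ≤ D x) (hD1 : ∑ x, D x = 1)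
    (f : ℝ → ℝ) (hf : ConvexOn ℝ Set.univ f) :
    let m := n / w
    let ψbar : (Fin n → X) → ℝ := fun S =>
      (∑ g : Fin w ↪ Fin n, ψ (fun j => S (g j))) / (Fintype.card (Fin w ↪ Fin n))
    (∑ S : Fin n → X, (∏ i, D (S i)) * f (ψbar S))
      ≤ ∑ G : Fin m → (Fin w → X),
          (∏ i, ∏ j, D (G i j)) * f ((∑ i, ψ (G i)) / m) := by
  classical
  intro m ψbar
  have hm : 0 < m := Nat.div_pos hwn hw
  have hmne : (m : ℝ) ≠ 0 := Nat.cast_ne_zero.2 hm.ne'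
  have hNpos : 0 < Fintype.card (Fin w ↪ Fin n) := by
    rw [Fintype.card_pos_iff]
    exact ⟨⟨Fin.castLE hwn, Fin.castLE_injective hwn⟩⟩
  have hNne : (Fintype.card (Fin w ↪ Fin n) : ℝ) ≠ 0 := Nat.cast_ne_zero.2 hNpos.ne'
  have hPpos : 0 < Fintype.card (Equiv.Perm (Fin n)) := Fintype.card_pos
  have hPne : (Fintype.card (Equiv.Perm (Fin n)) : ℝ) ≠ 0 := Nat.cast_ne_zero.2 hPpos.ne'
  set P : ℝ := (Fintype.card (Equiv.Perm (Fin n)) : ℝ) with hPdef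
  -- block embeddings
  have hbound : ∀ (i : Fin m) (j : Fin w), (i : ℕ) * w + j < n := by
    intro i j
    have h1 : (i : ℕ) * w + j < ((i : ℕ) + 1) * w := by
      have := j.2; nlinarith
    have h2 : ((i : ℕ) + 1) * w ≤ m * w := Nat.mul_le_mul_right w i.2
    have h3 : m * w ≤ n := Nat.div_mul_le_self n w
    omega
  let emb : Fin m → (Fin w ↪ Fin n) := fun i =>
    ⟨fun j => ⟨(i : ℕ) * w + j, hbound i j⟩, fun j₁ j₂ h => by
      apply Fin.ext
      have := congrArg Fin.val h
      simpa using this⟩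
  have huniq : ∀ (i i' : Fin m) (j j' : Fin w),
      (i : ℕ) * w + j = (i' : ℕ) * w + j' → i = i' ∧ j = j' := by
    intro i i' j j' h
    have h1 : ((i : ℕ) * w + j) / w = i := by
      rw [mul_comm, Nat.mul_add_div hw, Nat.div_eq_of_lt j.2, add_zero]
    have h2 : ((i' : ℕ) * w + j') / w = i' := by
      rw [mul_comm, Nat.mul_add_div hw, Nat.div_eq_of_lt j'.2, add_zero]
    have hii : (i : ℕ) = i' := by rw [← h1, h, h2]
    have hiw : (i : ℕ) * w = (i' : ℕ) * w := by rw [hii]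
    exact ⟨Fin.ext hii, Fin.ext (by omega)⟩
  -- the combined embedding for each permutation
  let eπ : Equiv.Perm (Fin n) → ((Fin m × Fin w) ↪ Fin n) := fun π =>
    ⟨fun q => π (emb q.1 q.2), by
      rintro ⟨i, j⟩ ⟨i', j'⟩ h
      simp only at h
      have h2 : emb i j = emb i' j' := π.injective h
      have h3 : (i : ℕ) * w + j = (i' : ℕ) * w + j' := congrArg Fin.val h2
      obtain ⟨hi, hj⟩ := huniq i i' j j' h3
      exact Prod.ext hi hj⟩
  -- ψbar as average over permutations
  have havg : ∀ S : Fin n → X,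
      ψbar S = ∑ π : Equiv.Perm (Fin n),
        (1 / P) • ((∑ i : Fin m, ψ (fun j => S (π (emb i j)))) / m) := by
    intro S
    set T := ∑ g : Fin w ↪ Fin n, ψ (fun j => S (g j)) with hT
    have hinner : ∀ i : Fin m,
        ∑ π : Equiv.Perm (Fin n), ψ (fun j => S (π (emb i j))) = P * T /
          (Fintype.card (Fin w ↪ Fin n) : ℝ) := by
      intro i
      have h := keyB (emb i) (fun g => ψ (fun j => S (g j)))
      simp only [Function.Embedding.trans_apply, Equiv.coe_toEmbedding] at h
      rw [eq_div_iff hNne]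
      linarith [h]
    simp only [smul_eq_mul]
    rw [← Finset.mul_sum, ← Finset.sum_div, Finset.sum_comm]
    simp only [hinner]
    rw [Finset.sum_const, Finset.card_univ, Fintype.card_fin, nsmul_eq_mul]
    show ψbar S = 1 / P * ((m : ℝ) * (P * T / (Fintype.card (Fin w ↪ Fin n) : ℝ)) / m)
    show T / (Fintype.card (Fin w ↪ Fin n) : ℝ)
      = 1 / P * ((m : ℝ) * (P * T / (Fintype.card (Fin w ↪ Fin n) : ℝ)) / m)
    rw [mul_comm ((m : ℝ)) _, mul_div_assoc, div_self hmne, mul_one]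
    rw [one_div, ← mul_div_assoc, inv_mul_cancel_left₀ hPne]
  -- Jensen
  have hJ : ∀ S : Fin n → X, f (ψbar S) ≤ ∑ π : Equiv.Perm (Fin n),
      (1 / P) * f ((∑ i : Fin m, ψ (fun j => S (π (emb i j)))) / m) := by
    intro S
    rw [havg S]
    have hw1 : ∑ _π : Equiv.Perm (Fin n), (1 / P) = 1 := by
      rw [Finset.sum_const, Finset.card_univ, nsmul_eq_mul, ← hPdef, mul_one_div,
        div_self hPne]
    have := hf.map_sum_le (t := univ)
      (w := fun _ : Equiv.Perm (Fin n) => 1 / P)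
      (p := fun π => (∑ i : Fin m, ψ (fun j => S (π (emb i j)))) / m)
      (fun _ _ => by positivity) hw1 (fun _ _ => Set.mem_univ _)
    simpa [smul_eq_mul] using this
  -- main chain
  calc ∑ S : Fin n → X, (∏ i, D (S i)) * f (ψbar S)
      ≤ ∑ S : Fin n → X, (∏ i, D (S i)) *
          (∑ π : Equiv.Perm (Fin n),
            (1 / P) * f ((∑ i : Fin m, ψ (fun j => S (π (emb i j)))) / m)) := by
        refine Finset.sum_le_sum (fun S _ => ?_)
        exact mul_le_mul_of_nonneg_left (hJ S) (Finset.prod_nonneg (fun i _ => hD0 _))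
    _ = ∑ π : Equiv.Perm (Fin n), (1 / P) *
          (∑ S : Fin n → X, (∏ i, D (S i)) *
            f ((∑ i : Fin m, ψ (fun j => S (π (emb i j)))) / m)) := by
        simp only [Finset.mul_sum]
        rw [Finset.sum_comm]
        refine Finset.sum_congr rfl (fun π _ => Finset.sum_congr rfl (fun S _ => by ring))
    _ = ∑ π : Equiv.Perm (Fin n), (1 / P) *
          (∑ G : Fin m → (Fin w → X),
            (∏ i, ∏ j, D (G i j)) * f ((∑ i, ψ (G i)) / m)) := by
        refine Finset.sum_congr rfl (fun π _ => ?_)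
        congr 1
        have hmarg := marg (eπ π) D hD1
          (fun T : Fin m × Fin w → X => f ((∑ i : Fin m, ψ (fun j => T (i, j))) / m))
        rw [show (∑ S : Fin n → X, (∏ i, D (S i)) *
              f ((∑ i : Fin m, ψ (fun j => S (π (emb i j)))) / m))
            = ∑ S : Fin n → X, (∏ i, D (S i)) *
              (fun T : Fin m × Fin w → X => f ((∑ i : Fin m, ψ (fun j => T (i, j))) / m))
                (fun q => S (eπ π q)) from rfl]
        rw [hmarg]
        rw [← Equiv.sum_comp (Equiv.curry (Fin m) (Fin w) X).symm
          (fun T : Fin m × Fin w → X => (∏ q, D (T q)) *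
            (fun T : Fin m × Fin w → X => f ((∑ i : Fin m, ψ (fun j => T (i, j))) / m)) T)]
        refine Finset.sum_congr rfl (fun G _ => ?_)
        simp only [Equiv.curry_symm_apply]
        congr 1
        · rw [Fintype.prod_prod_type]
          rfl
    _ = ∑ G : Fin m → (Fin w → X),
          (∏ i, ∏ j, D (G i j)) * f ((∑ i, ψ (G i)) / m) := by
        rw [← Finset.sum_mul, Finset.sum_const, Finset.card_univ, nsmul_eq_mul, ← hPdef,
          mul_one_div, div_self hPne, one_mul]
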